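/- Assume the balance condition α + γ > 1 and set δ = 1 − 1/α + γ/α > 0. For every λ ∈ [0,α) and every T > 0 there exist constants C₁, C₂ > 0 such that for all t ∈ (0,T], s ∈ [0,t], and x, y ∈ ℝ^d, one has C₁ H_t^(λ)(x,y) ≤ K_t^(λ)( υ_{t−s}^{t−s}(x), θ_s^0(y) ) ≤ C₂ H_t^(λ)(x,y). -/

import Mathlib

open MeasureTheory Real Set

/-- `Euc d` is the Euclidean space `ℝ^d`. -/
abbrev Euc (d : ℕ) := EuclideanSpace ℝ (Fin d)

/-- The Gaussian mollification `b(t,x)` of the drift `b` at scale `t^{1/α}`: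
`b(t,x) = (2π)^{-d/2} t^{-d/α} ∫ b(z) exp(-|z-x|²/(2 t^{2/α})) dz` for `t > 0`
(with the natural boundary value `b(x)` for `t ≤ 0`). -/
noncomputable def moll (d : ℕ) (α : ℝ) (b : Euc d → Euc d) (t : ℝ) (x : Euc d) : Euc d :=
  if t ≤ 0 then b x
  else ((2 * Real.pi) ^ (-(d : ℝ) / 2) * t ^ (-(d : ℝ) / α)) •
    ∫ z : Euc d, Real.exp (-‖z - x‖ ^ 2 / (2 * t ^ (2 / α))) • b z

/-- `IsSol F x0 f` : `f` solves the Cauchy problem `f' (t) = F t (f t)` on `[0,∞)`, `f 0 = x0`. -/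
def IsSol (d : ℕ) (F : ℝ → Euc d → Euc d) (x0 : Euc d) (f : ℝ → Euc d) : Prop :=
  f 0 = x0 ∧ ∀ t : ℝ, 0 ≤ t → HasDerivWithinAt f (F t (f t)) (Set.Ici 0) t

/-- The kernel `G^{(λ)}(x) = (|x| ∨ 1)^{-d-λ}`. -/
noncomputable def Gfun (d : ℕ) (lam : ℝ) (x : Euc d) : ℝ :=
  (max ‖x‖ 1) ^ (-(d : ℝ) - lam)

/-- The kernel
`K_t^{(λ)}(x,y) = (((|y-x|/t^{1/α})^λ ∨ 1) ∧ t^{-λ/α}) · t^{-d/α} G^{(α)}((y-x)/t^{1/α})`. -/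
noncomputable def Kker (d : ℕ) (α lam : ℝ) (t : ℝ) (x y : Euc d) : ℝ :=
  min (max ((‖y - x‖ / t ^ (1 / α)) ^ lam) 1) (t ^ (-(lam / α))) *
    (t ^ (-(d : ℝ) / α) * Gfun d α ((t ^ (1 / α))⁻¹ • (y - x)))

lemma KFC_rpow_subadd {x y p : ℝ} (hx : 0 ≤ x) (hy : 0 ≤ y) (hp0 : 0 ≤ p) (hp1 : p ≤ 1) :
    (x + y) ^ p ≤ x ^ p + y ^ p := by
  have h := NNReal.rpow_add_le_add_rpow x.toNNReal y.toNNReal hp0 hp1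
  have h2 : ((x.toNNReal + y.toNNReal : NNReal) : ℝ) ^ p ≤
      ((x.toNNReal ^ p + y.toNNReal ^ p : NNReal) : ℝ) := by
    rw [← NNReal.coe_rpow]; exact_mod_cast h
  simpa [Real.coe_toNNReal _ hx, Real.coe_toNNReal _ hy, NNReal.coe_rpow] using h2


lemma KFC_integral_gauss (d : ℕ) {c : ℝ} (hc : 0 < c) :
    ∫ v : Euc d, rexp (-(c * ‖v‖ ^ 2)) = (π / c) ^ ((d : ℝ) / 2) := by
  have h := GaussianFourier.integral_rexp_neg_mul_sq_norm (V := Euc d) hc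
  simp only [neg_mul] at h ⊢
  rw [h, finrank_euclideanSpace_fin]

lemma KFC_integrable_gauss (d : ℕ) {c : ℝ} (hc : 0 < c) :
    Integrable (fun v : Euc d => rexp (-(c * ‖v‖ ^ 2))) := by
  have h := (GaussianFourier.integrable_cexp_neg_mul_sq_norm_add (V := Euc d)
    (b := (c : ℂ)) (by simpa using hc) 0 0).norm
  have heq : ∀ v : Euc d, ‖Complex.exp (-(c:ℂ) * ‖v‖ ^ 2 + 0 * (inner ℝ (0 : Euc d) v : ℝ))‖
      = rexp (-(c * ‖v‖ ^ 2)) := by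
    intro v
    rw [Complex.norm_exp]
    have : ((‖v‖:ℂ) ^ 2).re = ‖v‖ ^ 2 := by
      rw [← Complex.ofReal_pow]; exact Complex.ofReal_re _
    simp [this]
  exact h.congr (Filter.Eventually.of_forall heq)


section Moll

variable {d : ℕ} {α γ C₀ : ℝ} {b : Euc d → Euc d}

lemma KFC_b_cont (hγ0 : 0 < γ) (hb_hol : ∀ x y, ‖b x - b y‖ ≤ C₀ * ‖x - y‖ ^ γ) :
    Continuous b := by
  rw [continuous_iff_continuousAt]
  intro x
  rw [ContinuousAt, tendsto_iff_dist_tendsto_zero]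
  have h1 : Filter.Tendsto (fun y : Euc d => ‖y - x‖) (nhds x) (nhds 0) := by
    have := (continuous_id.sub (continuous_const (y := x))).norm.tendsto x
    simpa using this
  have h2 : Filter.Tendsto (fun r : ℝ => C₀ * r ^ γ) (nhds 0) (nhds 0) := by
    have hcont : ContinuousAt (fun r : ℝ => r ^ γ) 0 :=
      Real.continuousAt_rpow_const 0 γ (Or.inr (le_of_lt hγ0))
    have := (hcont.const_smul C₀).tendsto
    simp only [ContinuousAt, Pi.smul_def, Real.zero_rpow (ne_of_gt hγ0), smul_eq_mul, mul_zero] at this ⊢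
    exact this
  have h3 : Filter.Tendsto (fun y : Euc d => C₀ * ‖y - x‖ ^ γ) (nhds x) (nhds 0) := by
    have := h2.comp h1
    simpa [Function.comp_def] using this
  exact squeeze_zero (fun y => dist_nonneg)
    (fun y => by rw [dist_eq_norm]; exact hb_hol y x) h3

variable (hα : 0 < α) (hγ0 : 0 < γ) (hγ1 : γ ≤ 1) (hC₀ : 0 < C₀)
  (hb_bdd : ∀ x, ‖b x‖ ≤ C₀) (hb_hol : ∀ x y, ‖b x - b y‖ ≤ C₀ * ‖x - y‖ ^ γ)

section tpos

variable {t : ℝ} (ht : 0 < t)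

private lemma KFC_moll_pos (ht : 0 < t) (x : Euc d) :
    moll d α b t x = ((2 * Real.pi) ^ (-(d : ℝ) / 2) * t ^ (-(d : ℝ) / α)) •
      ∫ z : Euc d, rexp (-((2 * t ^ (2 / α))⁻¹ * ‖z - x‖ ^ 2)) • b z := by
  have hfun : (fun z : Euc d => rexp (-‖z - x‖ ^ 2 / (2 * t ^ (2 / α))) • b z)
      = fun z : Euc d => rexp (-((2 * t ^ (2 / α))⁻¹ * ‖z - x‖ ^ 2)) • b z := by
    funext z; congr 2; ring
  rw [moll, if_neg (not_le.mpr ht), hfun]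

end tpos

section tpos2

variable {t : ℝ}

private lemma KFC_c2_pos (ht : 0 < t) : 0 < (2 * t ^ (2 / α))⁻¹ := by
  have hτ : 0 < t ^ (2 / α) := Real.rpow_pos_of_pos ht _
  positivity

private lemma KFC_I_val (ht : 0 < t) :
    ∫ z : Euc d, rexp (-((2 * t ^ (2 / α))⁻¹ * ‖z‖ ^ 2))
      = (2 * π) ^ ((d : ℝ) / 2) * t ^ ((d : ℝ) / α) := by
  have hτ : 0 < t ^ (2 / α) := Real.rpow_pos_of_pos ht _
  rw [KFC_integral_gauss d (KFC_c2_pos (α := α) ht), div_inv_eq_mul]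
  have h1 : π * (2 * t ^ (2 / α)) = (2 * π) * t ^ (2 / α) := by ring
  rw [h1, Real.mul_rpow (by positivity) hτ.le]
  congr 1
  rw [← Real.rpow_mul ht.le]
  congr 1
  ring

private lemma KFC_pref_I (hα : 0 < α) (ht : 0 < t) :
    ((2 * π) ^ (-(d : ℝ) / 2) * t ^ (-(d : ℝ) / α)) *
      ((2 * π) ^ ((d : ℝ) / 2) * t ^ ((d : ℝ) / α)) = 1 := by
  have h2π : (0 : ℝ) < 2 * π := by positivity
  have : ((2 * π) ^ (-(d : ℝ) / 2) * t ^ (-(d : ℝ) / α)) *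
      ((2 * π) ^ ((d : ℝ) / 2) * t ^ ((d : ℝ) / α))
      = ((2 * π) ^ (-(d : ℝ) / 2) * (2 * π) ^ ((d : ℝ) / 2)) *
        (t ^ (-(d : ℝ) / α) * t ^ ((d : ℝ) / α)) := by ring
  rw [this, ← Real.rpow_add h2π, ← Real.rpow_add ht]
  simp [neg_div]

private lemma KFC_gshift_int (ht : 0 < t) (x : Euc d) :
    Integrable (fun z : Euc d => rexp (-((2 * t ^ (2 / α))⁻¹ * ‖z - x‖ ^ 2))) :=
  (KFC_integrable_gauss d (KFC_c2_pos (α := α) ht)).comp_sub_right x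

private lemma KFC_main_int (hγ0 : 0 < γ) (hC₀ : 0 < C₀)
    (hb_bdd : ∀ x, ‖b x‖ ≤ C₀) (hb_hol : ∀ x y, ‖b x - b y‖ ≤ C₀ * ‖x - y‖ ^ γ)
    (ht : 0 < t) (w : Euc d) :
    Integrable (fun z : Euc d => rexp (-((2 * t ^ (2 / α))⁻¹ * ‖z‖ ^ 2)) • b (z + w)) := by
  have hbc : Continuous b := KFC_b_cont hγ0 hb_hol
  have hgc : Continuous (fun z : Euc d => rexp (-((2 * t ^ (2 / α))⁻¹ * ‖z‖ ^ 2))) := by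
    have hn : Continuous fun z : Euc d => ‖z‖ := continuous_norm
    exact Real.continuous_exp.comp (continuous_const.mul (hn.pow 2)).neg
  apply Integrable.mono' ((KFC_integrable_gauss d (KFC_c2_pos (α := α) ht)).const_mul C₀)
    ((hgc.smul (hbc.comp (continuous_id.add continuous_const))).aestronglyMeasurable)
  apply Filter.Eventually.of_forall
  intro z
  show ‖rexp (-((2 * t ^ (2 / α))⁻¹ * ‖z‖ ^ 2)) • b (z + w)‖ ≤ C₀ * rexp (-((2 * t ^ (2 / α))⁻¹ * ‖z‖ ^ 2))
  rw [norm_smul, Real.norm_eq_abs, abs_of_nonneg (Real.exp_pos _).le, mul_comm]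
  exact mul_le_mul_of_nonneg_right (hb_bdd _) (Real.exp_pos _).le

end tpos2

lemma KFC_moll_bound (hα : 0 < α) (hγ0 : 0 < γ) (hC₀ : 0 < C₀)
    (hb_bdd : ∀ x, ‖b x‖ ≤ C₀) (hb_hol : ∀ x y, ‖b x - b y‖ ≤ C₀ * ‖x - y‖ ^ γ)
    (t : ℝ) (x : Euc d) : ‖moll d α b t x‖ ≤ C₀ := by
  rcases le_or_gt t 0 with ht | ht
  · rw [moll, if_pos ht]; exact hb_bdd x
  rw [KFC_moll_pos ht]
  have hpref : (0 : ℝ) < (2 * π) ^ (-(d : ℝ) / 2) * t ^ (-(d : ℝ) / α) := by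
    have h1 : (0:ℝ) < (2 * π) ^ (-(d : ℝ) / 2) := Real.rpow_pos_of_pos (by positivity) _
    have h2 : (0:ℝ) < t ^ (-(d : ℝ) / α) := Real.rpow_pos_of_pos ht _
    positivity
  rw [norm_smul, Real.norm_eq_abs, abs_of_pos hpref]
  have hint : Integrable (fun z : Euc d => rexp (-((2 * t ^ (2 / α))⁻¹ * ‖z - x‖ ^ 2))) :=
    KFC_gshift_int (α := α) ht x
  have key : ‖∫ z : Euc d, rexp (-((2 * t ^ (2 / α))⁻¹ * ‖z - x‖ ^ 2)) • b z‖
      ≤ C₀ * ((2 * π) ^ ((d : ℝ) / 2) * t ^ ((d : ℝ) / α)) := by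
    calc ‖∫ z : Euc d, rexp (-((2 * t ^ (2 / α))⁻¹ * ‖z - x‖ ^ 2)) • b z‖
        ≤ ∫ z : Euc d, ‖rexp (-((2 * t ^ (2 / α))⁻¹ * ‖z - x‖ ^ 2)) • b z‖ :=
          norm_integral_le_integral_norm _
      _ ≤ ∫ z : Euc d, C₀ * rexp (-((2 * t ^ (2 / α))⁻¹ * ‖z - x‖ ^ 2)) := by
          apply integral_mono_of_nonneg (Filter.Eventually.of_forall fun z => norm_nonneg _)
            (hint.const_mul C₀) (Filter.Eventually.of_forall fun z => ?_)
          show ‖rexp (-((2 * t ^ (2 / α))⁻¹ * ‖z - x‖ ^ 2)) • b z‖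
            ≤ C₀ * rexp (-((2 * t ^ (2 / α))⁻¹ * ‖z - x‖ ^ 2))
          rw [norm_smul, Real.norm_eq_abs, abs_of_nonneg (Real.exp_pos _).le, mul_comm]
          exact mul_le_mul_of_nonneg_right (hb_bdd _) (Real.exp_pos _).le
      _ = C₀ * ∫ z : Euc d, rexp (-((2 * t ^ (2 / α))⁻¹ * ‖z - x‖ ^ 2)) :=
          integral_const_mul _ _
      _ = C₀ * ((2 * π) ^ ((d : ℝ) / 2) * t ^ ((d : ℝ) / α)) := by
          rw [integral_sub_right_eq_self
            (fun z : Euc d => rexp (-((2 * t ^ (2 / α))⁻¹ * ‖z‖ ^ 2))) x,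
            KFC_I_val (α := α) ht]
  calc ((2 * π) ^ (-(d : ℝ) / 2) * t ^ (-(d : ℝ) / α)) *
        ‖∫ z : Euc d, rexp (-((2 * t ^ (2 / α))⁻¹ * ‖z - x‖ ^ 2)) • b z‖
      ≤ ((2 * π) ^ (-(d : ℝ) / 2) * t ^ (-(d : ℝ) / α)) *
        (C₀ * ((2 * π) ^ ((d : ℝ) / 2) * t ^ ((d : ℝ) / α))) :=
        mul_le_mul_of_nonneg_left key hpref.le
    _ = C₀ * (((2 * π) ^ (-(d : ℝ) / 2) * t ^ (-(d : ℝ) / α)) *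
        ((2 * π) ^ ((d : ℝ) / 2) * t ^ ((d : ℝ) / α))) := by ring
    _ = C₀ := by rw [KFC_pref_I hα ht, mul_one]

lemma KFC_translate (ht : 0 < t) (x : Euc d) :
    ∫ z : Euc d, rexp (-((2 * t ^ (2 / α))⁻¹ * ‖z - x‖ ^ 2)) • b z
      = ∫ w : Euc d, rexp (-((2 * t ^ (2 / α))⁻¹ * ‖w‖ ^ 2)) • b (w + x) := by
  rw [← integral_sub_right_eq_self
    (fun w : Euc d => rexp (-((2 * t ^ (2 / α))⁻¹ * ‖w‖ ^ 2)) • b (w + x)) x]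
  congr 1
  funext z
  rw [sub_add_cancel]

lemma KFC_moll_hol (hα : 0 < α) (hγ0 : 0 < γ) (hC₀ : 0 < C₀)
    (hb_bdd : ∀ x, ‖b x‖ ≤ C₀) (hb_hol : ∀ x y, ‖b x - b y‖ ≤ C₀ * ‖x - y‖ ^ γ)
    (t : ℝ) (x y : Euc d) :
    ‖moll d α b t x - moll d α b t y‖ ≤ C₀ * ‖x - y‖ ^ γ := by
  rcases le_or_gt t 0 with ht | ht
  · rw [moll, moll, if_pos ht, if_pos ht]; exact hb_hol x y
  have hτ : 0 < t ^ (2 / α) := Real.rpow_pos_of_pos ht _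
  have hpref : (0 : ℝ) < (2 * π) ^ (-(d : ℝ) / 2) * t ^ (-(d : ℝ) / α) := by
    have h1 : (0:ℝ) < (2 * π) ^ (-(d : ℝ) / 2) := Real.rpow_pos_of_pos (by positivity) _
    have h2 : (0:ℝ) < t ^ (-(d : ℝ) / α) := Real.rpow_pos_of_pos ht _
    positivity
  have hix := KFC_main_int (α := α) hγ0 hC₀ hb_bdd hb_hol ht x
  have hiy := KFC_main_int (α := α) hγ0 hC₀ hb_bdd hb_hol ht y
  rw [KFC_moll_pos ht x, KFC_moll_pos ht y, KFC_translate (b := b) ht x,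
    KFC_translate (b := b) ht y, ← smul_sub, ← integral_sub hix hiy]
  have hfun : (fun w : Euc d => rexp (-((2 * t ^ (2 / α))⁻¹ * ‖w‖ ^ 2)) • b (w + x)
        - rexp (-((2 * t ^ (2 / α))⁻¹ * ‖w‖ ^ 2)) • b (w + y))
      = fun w : Euc d => rexp (-((2 * t ^ (2 / α))⁻¹ * ‖w‖ ^ 2)) • (b (w + x) - b (w + y)) := by
    funext w; rw [smul_sub]
  rw [hfun, norm_smul, Real.norm_eq_abs, abs_of_pos hpref]
  have hint : Integrable (fun w : Euc d => rexp (-((2 * t ^ (2 / α))⁻¹ * ‖w‖ ^ 2))) :=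
    KFC_integrable_gauss d (KFC_c2_pos (α := α) ht)
  have key : ‖∫ w : Euc d, rexp (-((2 * t ^ (2 / α))⁻¹ * ‖w‖ ^ 2)) • (b (w + x) - b (w + y))‖
      ≤ (C₀ * ‖x - y‖ ^ γ) * ((2 * π) ^ ((d : ℝ) / 2) * t ^ ((d : ℝ) / α)) := by
    calc ‖∫ w : Euc d, rexp (-((2 * t ^ (2 / α))⁻¹ * ‖w‖ ^ 2)) • (b (w + x) - b (w + y))‖
        ≤ ∫ w : Euc d, ‖rexp (-((2 * t ^ (2 / α))⁻¹ * ‖w‖ ^ 2)) • (b (w + x) - b (w + y))‖ :=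
          norm_integral_le_integral_norm _
      _ ≤ ∫ w : Euc d, (C₀ * ‖x - y‖ ^ γ) * rexp (-((2 * t ^ (2 / α))⁻¹ * ‖w‖ ^ 2)) := by
          apply integral_mono_of_nonneg (Filter.Eventually.of_forall fun w => norm_nonneg _)
            (hint.const_mul _) (Filter.Eventually.of_forall fun w => ?_)
          show ‖rexp (-((2 * t ^ (2 / α))⁻¹ * ‖w‖ ^ 2)) • (b (w + x) - b (w + y))‖
            ≤ (C₀ * ‖x - y‖ ^ γ) * rexp (-((2 * t ^ (2 / α))⁻¹ * ‖w‖ ^ 2))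
          rw [norm_smul, Real.norm_eq_abs, abs_of_nonneg (Real.exp_pos _).le, mul_comm]
          apply mul_le_mul_of_nonneg_right _ (Real.exp_pos _).le
          calc ‖b (w + x) - b (w + y)‖ ≤ C₀ * ‖(w + x) - (w + y)‖ ^ γ := hb_hol _ _
            _ = C₀ * ‖x - y‖ ^ γ := by rw [add_sub_add_left_eq_sub]
      _ = (C₀ * ‖x - y‖ ^ γ) * ∫ w : Euc d, rexp (-((2 * t ^ (2 / α))⁻¹ * ‖w‖ ^ 2)) :=
          integral_const_mul _ _
      _ = (C₀ * ‖x - y‖ ^ γ) * ((2 * π) ^ ((d : ℝ) / 2) * t ^ ((d : ℝ) / α)) := by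
          rw [KFC_I_val (α := α) ht]
  calc ((2 * π) ^ (-(d : ℝ) / 2) * t ^ (-(d : ℝ) / α)) *
        ‖∫ w : Euc d, rexp (-((2 * t ^ (2 / α))⁻¹ * ‖w‖ ^ 2)) • (b (w + x) - b (w + y))‖
      ≤ ((2 * π) ^ (-(d : ℝ) / 2) * t ^ (-(d : ℝ) / α)) *
        ((C₀ * ‖x - y‖ ^ γ) * ((2 * π) ^ ((d : ℝ) / 2) * t ^ ((d : ℝ) / α))) :=
        mul_le_mul_of_nonneg_left key hpref.le
    _ = (C₀ * ‖x - y‖ ^ γ) * (((2 * π) ^ (-(d : ℝ) / 2) * t ^ (-(d : ℝ) / α)) *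
        ((2 * π) ^ ((d : ℝ) / 2) * t ^ ((d : ℝ) / α))) := by ring
    _ = C₀ * ‖x - y‖ ^ γ := by rw [KFC_pref_I hα ht, mul_one]

private lemma KFC_I4_val (ht : 0 < t) :
    ∫ z : Euc d, rexp (-((4 * t ^ (2 / α))⁻¹ * ‖z‖ ^ 2))
      = 2 ^ ((d : ℝ) / 2) * ((2 * π) ^ ((d : ℝ) / 2) * t ^ ((d : ℝ) / α)) := by
  have hτ : 0 < t ^ (2 / α) := Real.rpow_pos_of_pos ht _
  have hc4 : 0 < (4 * t ^ (2 / α))⁻¹ := by positivity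
  rw [KFC_integral_gauss d hc4, div_inv_eq_mul]
  have h1 : π * (4 * t ^ (2 / α)) = 2 * ((2 * π) * t ^ (2 / α)) := by ring
  rw [h1, Real.mul_rpow (by norm_num) (by positivity),
    Real.mul_rpow (by positivity) hτ.le]
  congr 2
  rw [← Real.rpow_mul ht.le]
  congr 1
  ring

private lemma KFC_pointwise (hα : 0 < α) (hγ0 : 0 < γ) (hγ1 : γ ≤ 1) (ht : 0 < t) (w : Euc d) :
    rexp (-((2 * t ^ (2 / α))⁻¹ * ‖w‖ ^ 2)) * ‖w‖ ^ γ
      ≤ t ^ (γ / α) * (rexp (-((2 * t ^ (2 / α))⁻¹ * ‖w‖ ^ 2))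
        + 4 * rexp (-((4 * t ^ (2 / α))⁻¹ * ‖w‖ ^ 2))) := by
  have hτ : 0 < t ^ (2 / α) := Real.rpow_pos_of_pos ht _
  have hσ : 0 < t ^ (1 / α) := Real.rpow_pos_of_pos ht _
  have hσ2 : (t ^ (1 / α)) ^ 2 = t ^ (2 / α) := by
    rw [← Real.rpow_natCast (t ^ (1 / α)) 2, ← Real.rpow_mul ht.le]
    congr 1
    push_cast
    ring
  have key1 : ‖w‖ ^ γ ≤ t ^ (γ / α) * (1 + ‖w‖ ^ 2 / t ^ (2 / α)) := by
    have hw : ‖w‖ = t ^ (1 / α) * (‖w‖ / t ^ (1 / α)) := by field_simp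
    rw [hw, Real.mul_rpow hσ.le (by positivity)]
    have hσγ : (t ^ (1 / α)) ^ γ = t ^ (γ / α) := by
      rw [← Real.rpow_mul ht.le]; congr 1; ring
    rw [hσγ]
    apply mul_le_mul_of_nonneg_left _ (Real.rpow_nonneg ht.le _)
    set q := ‖w‖ / t ^ (1 / α) with hq
    have hq0 : 0 ≤ q := by positivity
    have hsq : (t ^ (1 / α) * q) ^ 2 / t ^ (2 / α) = q ^ 2 := by
      rw [mul_pow, hσ2]; field_simp
    rw [hsq]
    rcases le_total q 1 with hq1 | hq1
    · have := Real.rpow_le_one hq0 hq1 hγ0.le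
      nlinarith [sq_nonneg q]
    · have h1 : q ^ γ ≤ q ^ (1 : ℝ) := Real.rpow_le_rpow_of_exponent_le hq1 hγ1
      rw [Real.rpow_one] at h1
      nlinarith
  have key2 : (‖w‖ ^ 2 / t ^ (2 / α)) * rexp (-((2 * t ^ (2 / α))⁻¹ * ‖w‖ ^ 2))
      ≤ 4 * rexp (-((4 * t ^ (2 / α))⁻¹ * ‖w‖ ^ 2)) := by
    set yv := (4 * t ^ (2 / α))⁻¹ * ‖w‖ ^ 2 with hyv
    have hyv0 : 0 ≤ yv := by positivity
    have h2 : (2 * t ^ (2 / α))⁻¹ * ‖w‖ ^ 2 = 2 * yv := by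
      rw [hyv]; field_simp; ring
    have h4 : ‖w‖ ^ 2 / t ^ (2 / α) = 4 * yv := by
      rw [hyv]; field_simp
    have he : rexp (-(2 * yv)) = rexp (-yv) * rexp (-yv) := by
      rw [← Real.exp_add]; congr 1; ring
    have hy1 : yv * rexp (-yv) ≤ 1 := by
      have h := Real.add_one_le_exp yv
      have h2' : yv ≤ rexp yv := by linarith
      rw [Real.exp_neg]
      calc yv * (rexp yv)⁻¹ ≤ rexp yv * (rexp yv)⁻¹ :=
            mul_le_mul_of_nonneg_right h2' (inv_nonneg.mpr (Real.exp_pos _).le)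
        _ = 1 := mul_inv_cancel₀ (ne_of_gt (Real.exp_pos _))
    calc (‖w‖ ^ 2 / t ^ (2 / α)) * rexp (-((2 * t ^ (2 / α))⁻¹ * ‖w‖ ^ 2))
        = 4 * yv * (rexp (-yv) * rexp (-yv)) := by rw [h4, h2, he]
      _ = 4 * (yv * rexp (-yv)) * rexp (-yv) := by ring
      _ ≤ 4 * 1 * rexp (-yv) := by
          apply mul_le_mul_of_nonneg_right _ (Real.exp_pos _).le
          apply mul_le_mul_of_nonneg_left hy1 (by norm_num)
      _ = 4 * rexp (-((4 * t ^ (2 / α))⁻¹ * ‖w‖ ^ 2)) := by rw [hyv]; ring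
  have hg0 : 0 ≤ rexp (-((2 * t ^ (2 / α))⁻¹ * ‖w‖ ^ 2)) := (Real.exp_pos _).le
  calc rexp (-((2 * t ^ (2 / α))⁻¹ * ‖w‖ ^ 2)) * ‖w‖ ^ γ
      ≤ rexp (-((2 * t ^ (2 / α))⁻¹ * ‖w‖ ^ 2)) * (t ^ (γ / α) * (1 + ‖w‖ ^ 2 / t ^ (2 / α))) :=
        mul_le_mul_of_nonneg_left key1 hg0
    _ = t ^ (γ / α) * (rexp (-((2 * t ^ (2 / α))⁻¹ * ‖w‖ ^ 2))
        + (‖w‖ ^ 2 / t ^ (2 / α)) * rexp (-((2 * t ^ (2 / α))⁻¹ * ‖w‖ ^ 2))) := by ring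
    _ ≤ t ^ (γ / α) * (rexp (-((2 * t ^ (2 / α))⁻¹ * ‖w‖ ^ 2))
        + 4 * rexp (-((4 * t ^ (2 / α))⁻¹ * ‖w‖ ^ 2))) := by
        apply mul_le_mul_of_nonneg_left _ (Real.rpow_nonneg ht.le _)
        linarith [key2]

lemma KFC_moll_close (hα : 0 < α) (hγ0 : 0 < γ) (hγ1 : γ ≤ 1) (hC₀ : 0 < C₀)
    (hb_bdd : ∀ x, ‖b x‖ ≤ C₀) (hb_hol : ∀ x y, ‖b x - b y‖ ≤ C₀ * ‖x - y‖ ^ γ)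
    (t : ℝ) (ht : 0 ≤ t) (x : Euc d) :
    ‖moll d α b t x - b x‖ ≤ (C₀ * (1 + 4 * 2 ^ ((d : ℝ) / 2))) * t ^ (γ / α) := by
  rcases eq_or_lt_of_le ht with h0 | ht
  · rw [moll, if_pos (le_of_eq h0.symm), sub_self, norm_zero, ← h0,
      Real.zero_rpow (div_ne_zero (ne_of_gt hγ0) (ne_of_gt hα)), mul_zero]
  have hτ : 0 < t ^ (2 / α) := Real.rpow_pos_of_pos ht _
  have hpref : (0 : ℝ) < (2 * π) ^ (-(d : ℝ) / 2) * t ^ (-(d : ℝ) / α) := by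
    have h1 : (0:ℝ) < (2 * π) ^ (-(d : ℝ) / 2) := Real.rpow_pos_of_pos (by positivity) _
    have h2 : (0:ℝ) < t ^ (-(d : ℝ) / α) := Real.rpow_pos_of_pos ht _
    positivity
  have hint : Integrable (fun w : Euc d => rexp (-((2 * t ^ (2 / α))⁻¹ * ‖w‖ ^ 2))) :=
    KFC_integrable_gauss d (KFC_c2_pos (α := α) ht)
  have hint4 : Integrable (fun w : Euc d => rexp (-((4 * t ^ (2 / α))⁻¹ * ‖w‖ ^ 2))) :=
    KFC_integrable_gauss d (by positivity)
  have hix := KFC_main_int (α := α) hγ0 hC₀ hb_bdd hb_hol ht x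
  have hibx : Integrable (fun w : Euc d => rexp (-((2 * t ^ (2 / α))⁻¹ * ‖w‖ ^ 2)) • b x) :=
    hint.smul_const (b x)
  have hbx : b x = ((2 * π) ^ (-(d : ℝ) / 2) * t ^ (-(d : ℝ) / α)) •
      ∫ w : Euc d, rexp (-((2 * t ^ (2 / α))⁻¹ * ‖w‖ ^ 2)) • b x := by
    rw [integral_smul_const, KFC_I_val (α := α) ht, smul_smul, KFC_pref_I hα ht, one_smul]
  have heq : moll d α b t x - b x = ((2 * π) ^ (-(d : ℝ) / 2) * t ^ (-(d : ℝ) / α)) •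
      ∫ w : Euc d, rexp (-((2 * t ^ (2 / α))⁻¹ * ‖w‖ ^ 2)) • (b (w + x) - b x) := by
    rw [KFC_moll_pos ht x, KFC_translate (b := b) ht x]
    nth_rewrite 1 [hbx]
    rw [← smul_sub, ← integral_sub hix hibx]
    congr 1
    congr 1
    funext w
    rw [smul_sub]
  rw [heq, norm_smul, Real.norm_eq_abs, abs_of_pos hpref]
  have key : ‖∫ w : Euc d, rexp (-((2 * t ^ (2 / α))⁻¹ * ‖w‖ ^ 2)) • (b (w + x) - b x)‖
      ≤ (C₀ * t ^ (γ / α) * (1 + 4 * 2 ^ ((d : ℝ) / 2))) *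
        ((2 * π) ^ ((d : ℝ) / 2) * t ^ ((d : ℝ) / α)) := by
    calc ‖∫ w : Euc d, rexp (-((2 * t ^ (2 / α))⁻¹ * ‖w‖ ^ 2)) • (b (w + x) - b x)‖
        ≤ ∫ w : Euc d, ‖rexp (-((2 * t ^ (2 / α))⁻¹ * ‖w‖ ^ 2)) • (b (w + x) - b x)‖ :=
          norm_integral_le_integral_norm _
      _ ≤ ∫ w : Euc d, (C₀ * t ^ (γ / α)) * (rexp (-((2 * t ^ (2 / α))⁻¹ * ‖w‖ ^ 2))
            + 4 * rexp (-((4 * t ^ (2 / α))⁻¹ * ‖w‖ ^ 2))) := by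
          apply integral_mono_of_nonneg (Filter.Eventually.of_forall fun w => norm_nonneg _)
            ((hint.add (hint4.const_mul 4)).const_mul _)
            (Filter.Eventually.of_forall fun w => ?_)
          show ‖rexp (-((2 * t ^ (2 / α))⁻¹ * ‖w‖ ^ 2)) • (b (w + x) - b x)‖
            ≤ (C₀ * t ^ (γ / α)) * (rexp (-((2 * t ^ (2 / α))⁻¹ * ‖w‖ ^ 2))
              + 4 * rexp (-((4 * t ^ (2 / α))⁻¹ * ‖w‖ ^ 2)))
          rw [norm_smul, Real.norm_eq_abs, abs_of_nonneg (Real.exp_pos _).le]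
          have h1 : ‖b (w + x) - b x‖ ≤ C₀ * ‖w‖ ^ γ := by
            calc ‖b (w + x) - b x‖ ≤ C₀ * ‖(w + x) - x‖ ^ γ := hb_hol _ _
              _ = C₀ * ‖w‖ ^ γ := by rw [add_sub_cancel_right]
          calc rexp (-((2 * t ^ (2 / α))⁻¹ * ‖w‖ ^ 2)) * ‖b (w + x) - b x‖
              ≤ rexp (-((2 * t ^ (2 / α))⁻¹ * ‖w‖ ^ 2)) * (C₀ * ‖w‖ ^ γ) :=
                mul_le_mul_of_nonneg_left h1 (Real.exp_pos _).le
            _ = C₀ * (rexp (-((2 * t ^ (2 / α))⁻¹ * ‖w‖ ^ 2)) * ‖w‖ ^ γ) := by ring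
            _ ≤ C₀ * (t ^ (γ / α) * (rexp (-((2 * t ^ (2 / α))⁻¹ * ‖w‖ ^ 2))
                + 4 * rexp (-((4 * t ^ (2 / α))⁻¹ * ‖w‖ ^ 2)))) :=
                mul_le_mul_of_nonneg_left (KFC_pointwise hα hγ0 hγ1 ht w) hC₀.le
            _ = (C₀ * t ^ (γ / α)) * (rexp (-((2 * t ^ (2 / α))⁻¹ * ‖w‖ ^ 2))
                + 4 * rexp (-((4 * t ^ (2 / α))⁻¹ * ‖w‖ ^ 2))) := by ring
      _ = (C₀ * t ^ (γ / α)) * ((∫ w : Euc d, rexp (-((2 * t ^ (2 / α))⁻¹ * ‖w‖ ^ 2)))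
            + 4 * ∫ w : Euc d, rexp (-((4 * t ^ (2 / α))⁻¹ * ‖w‖ ^ 2))) := by
          rw [integral_const_mul, integral_add hint (hint4.const_mul 4), integral_const_mul]
      _ = (C₀ * t ^ (γ / α) * (1 + 4 * 2 ^ ((d : ℝ) / 2))) *
          ((2 * π) ^ ((d : ℝ) / 2) * t ^ ((d : ℝ) / α)) := by
          rw [KFC_I_val (α := α) ht, KFC_I4_val (α := α) ht]
          ring
  calc ((2 * π) ^ (-(d : ℝ) / 2) * t ^ (-(d : ℝ) / α)) *
        ‖∫ w : Euc d, rexp (-((2 * t ^ (2 / α))⁻¹ * ‖w‖ ^ 2)) • (b (w + x) - b x)‖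
      ≤ ((2 * π) ^ (-(d : ℝ) / 2) * t ^ (-(d : ℝ) / α)) *
        ((C₀ * t ^ (γ / α) * (1 + 4 * 2 ^ ((d : ℝ) / 2))) *
          ((2 * π) ^ ((d : ℝ) / 2) * t ^ ((d : ℝ) / α))) :=
        mul_le_mul_of_nonneg_left key hpref.le
    _ = (C₀ * (1 + 4 * 2 ^ ((d : ℝ) / 2))) * t ^ (γ / α) *
        (((2 * π) ^ (-(d : ℝ) / 2) * t ^ (-(d : ℝ) / α)) *
          ((2 * π) ^ ((d : ℝ) / 2) * t ^ ((d : ℝ) / α))) := by ring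
    _ = (C₀ * (1 + 4 * 2 ^ ((d : ℝ) / 2))) * t ^ (γ / α) := by
        rw [KFC_pref_I hα ht, mul_one]

end Moll

noncomputable def aseq (γ : ℝ) : ℕ → ℝ
  | 0 => 1
  | n + 1 => 1 + γ * aseq γ n

noncomputable def cseq (C₀ γ : ℝ) : ℕ → ℝ
  | 0 => 2 * C₀
  | n + 1 => C₀ * (cseq C₀ γ n) ^ γ

noncomputable def dseq (C₀ γ Kc Te : ℝ) : ℕ → ℝ
  | 0 => 0
  | n + 1 => C₀ + 2 * Kc + C₀ * Te * (dseq C₀ γ Kc Te n) ^ γ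

lemma aseq_ge_one {γ : ℝ} (hγ : 0 ≤ γ) : ∀ n, 1 ≤ aseq γ n := by
  intro n; induction n with
  | zero => simp [aseq]
  | succ n ih => simp only [aseq]; nlinarith

lemma cseq_pos {C₀ γ : ℝ} (hC : 0 < C₀) : ∀ n, 0 < cseq C₀ γ n := by
  intro n; induction n with
  | zero => simp only [cseq]; positivity
  | succ n ih => simp only [cseq]; positivity

lemma dseq_nonneg {C₀ γ Kc Te : ℝ} (hC : 0 ≤ C₀) (hK : 0 ≤ Kc) (hT : 0 ≤ Te) :
    ∀ n, 0 ≤ dseq C₀ γ Kc Te n := by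
  intro n; induction n with
  | zero => simp [dseq]
  | succ n ih => simp only [dseq]; positivity

lemma exists_aseq_ge {γ α : ℝ} (hγ0 : 0 < γ) (hγ1 : γ ≤ 1) (hα : 0 < α) (hbal : 1 < α + γ) :
    ∃ N, 1 / α ≤ aseq γ N := by
  by_contra h
  push_neg at h
  set ε := (α + γ - 1) / α with hε
  have hεpos : 0 < ε := div_pos (by linarith) hα
  have key : ∀ n : ℕ, 1 + (n : ℝ) * ε ≤ aseq γ n := by
    intro n; induction n with
    | zero => simp [aseq]
    | succ n ih =>
      have hn := h n
      have ha : aseq γ (n + 1) = 1 + γ * aseq γ n := rfl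
      have h1γ : (1 - γ) * aseq γ n ≤ (1 - γ) * (1 / α) :=
        mul_le_mul_of_nonneg_left hn.le (by linarith)
      have h2 : (1 - γ) * (1 / α) = 1 - ε := by rw [hε]; field_simp; ring
      have h3 : aseq γ n + ε ≤ 1 + γ * aseq γ n := by nlinarith
      rw [ha]
      push_cast
      nlinarith
  obtain ⟨n, hn⟩ := exists_nat_gt ((1 / α - 1) / ε)
  have h1 := key n
  have h2 := h n
  have : (1 / α - 1) < n * ε := by
    rw [div_lt_iff₀ hεpos] at hn; linarith
  linarith

lemma KFC_sol_lip {d : ℕ} {F : ℝ → Euc d → Euc d} {x0 : Euc d} {f : ℝ → Euc d} {C : ℝ}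
    (hF : ∀ τ z, ‖F τ z‖ ≤ C) (hf : IsSol d F x0 f) {p q : ℝ} (hp : 0 ≤ p) (hq : 0 ≤ q) :
    ‖f p - f q‖ ≤ C * |p - q| := by
  have h := Convex.norm_image_sub_le_of_norm_hasDerivWithin_le (f := f)
    (f' := fun τ => F τ (f τ)) (s := Set.Ici (0 : ℝ))
    (fun τ hτ => hf.2 τ hτ) (fun τ _ => hF τ (f τ)) (convex_Ici 0) hq hp
  simpa [Real.norm_eq_abs] using h

lemma KFC_psi_deriv {d : ℕ} {α : ℝ} {b : Euc d → Euc d} {t s : ℝ}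
    (hs0 : 0 ≤ s) (hst : s ≤ t) {x y : Euc d} {θ u : ℝ → Euc d}
    (hθ : IsSol d (fun τ z => -moll d α b |τ| z) y θ)
    (hu : IsSol d (fun τ z => moll d α b |τ - (t - s)| z) x u) :
    ∀ r ∈ Set.Icc (0 : ℝ) (t - s), HasDerivWithinAt (fun r => θ (t - r) - u r)
      (moll d α b (t - r) (θ (t - r)) - moll d α b (t - s - r) (u r))
      (Set.Icc 0 (t - s)) r := by
  intro r hr
  obtain ⟨hr0, hrL⟩ := hr
  have htr : 0 ≤ t - r := by linarith
  have h1 : HasDerivWithinAt (fun r : ℝ => t - r) (-1) (Set.Icc 0 (t - s)) r := by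
    simpa using (hasDerivWithinAt_id r (Set.Icc 0 (t - s))).const_sub t
  have h2 : HasDerivWithinAt θ (-moll d α b |t - r| (θ (t - r))) (Set.Ici 0) (t - r) :=
    hθ.2 _ htr
  have hmaps : Set.MapsTo (fun r : ℝ => t - r) (Set.Icc 0 (t - s)) (Set.Ici 0) := by
    intro p hp
    simp only [Set.mem_Ici]
    have := hp.2
    simp only [Set.mem_Icc] at hp
    linarith [hp.1, hp.2]
  have h3 := HasDerivWithinAt.scomp r h2 h1 hmaps
  have h4 : HasDerivWithinAt u (moll d α b |r - (t - s)| (u r)) (Set.Ici 0) r := hu.2 r hr0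
  have habs1 : |t - r| = t - r := abs_of_nonneg htr
  have habs2 : |r - (t - s)| = t - s - r := by
    rw [abs_of_nonpos (by linarith), neg_sub]
  rw [habs1] at h3
  rw [habs2] at h4
  have h5 := h3.sub (h4.mono Set.Icc_subset_Ici_self)
  have : (-1 : ℝ) • -moll d α b (t - r) (θ (t - r)) = moll d α b (t - r) (θ (t - r)) := by
    simp
  rw [this] at h5
  exact h5

set_option maxHeartbeats 1000000 in
lemma psi_bound (d : ℕ) (α γ C₀ : ℝ) (hα : α ∈ Set.Ioo (0 : ℝ) 2) (hγ : γ ∈ Set.Ioc (0 : ℝ) 1)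
    (hC₀ : 0 < C₀) (b : Euc d → Euc d) (hb_bdd : ∀ x, ‖b x‖ ≤ C₀)
    (hb_hol : ∀ x y, ‖b x - b y‖ ≤ C₀ * ‖x - y‖ ^ γ) (hbal : 1 < α + γ)
    (T : ℝ) (hT : 0 < T) :
    ∃ M > (0 : ℝ), ∀ t ∈ Set.Ioc (0 : ℝ) T, ∀ s ∈ Set.Icc (0 : ℝ) t, ∀ x y : Euc d,
      ∀ θ : ℝ → Euc d, IsSol d (fun τ z => -moll d α b |τ| z) y θ →
      ∀ u : ℝ → Euc d, IsSol d (fun τ z => moll d α b |τ - (t - s)| z) x u →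
      ∀ r₀ ∈ Set.Icc (0 : ℝ) (t - s), ∀ r ∈ Set.Icc (0 : ℝ) (t - s),
        ‖(θ (t - r) - u r) - (θ (t - r₀) - u r₀)‖ ≤
          M * t ^ (1 / α) * max (‖θ (t - r₀) - u r₀‖ / t ^ (1 / α)) 1 := by
  obtain ⟨hα0, hα2⟩ := hα
  obtain ⟨hγ0, hγ1⟩ := hγ
  set Kc := C₀ * (1 + 4 * 2 ^ ((d : ℝ) / 2)) with hKcdef
  have hKc0 : 0 < Kc := by
    have : (0:ℝ) < 2 ^ ((d : ℝ) / 2) := Real.rpow_pos_of_pos (by norm_num) _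
    positivity
  set T' := max T 1 with hT'def
  have hT'1 : (1 : ℝ) ≤ T' := le_max_right _ _
  have hT'0 : (0 : ℝ) < T' := lt_of_lt_of_le one_pos hT'1
  set e' := 1 + γ + (γ * γ - γ) / α with he'def
  have he'1 : 1 ≤ e' := by
    have h : γ + (γ * γ - γ) / α = γ * (α + γ - 1) / α := by field_simp; ring
    have h2 : 0 ≤ γ * (α + γ - 1) / α := by
      apply div_nonneg (mul_nonneg hγ0.le (by linarith)) hα0.le
    rw [he'def]
    linarith [h ▸ h2]
  set Te := T' ^ (e' - 1) with hTedef
  have hTe0 : 0 < Te := Real.rpow_pos_of_pos hT'0 _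
  obtain ⟨N, hN⟩ := exists_aseq_ge hγ0 hγ1 hα0 hbal
  set M := cseq C₀ γ N * T' ^ aseq γ N + dseq C₀ γ Kc Te N * T' ^ ((α + γ - 1) / α) with hMdef
  have hM0 : 0 < M := by
    have h1 : 0 < cseq C₀ γ N * T' ^ aseq γ N :=
      mul_pos (cseq_pos hC₀ N) (Real.rpow_pos_of_pos hT'0 _)
    have h2 : 0 ≤ dseq C₀ γ Kc Te N * T' ^ ((α + γ - 1) / α) :=
      mul_nonneg (dseq_nonneg hC₀.le hKc0.le hTe0.le N) (Real.rpow_pos_of_pos hT'0 _).le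
    rw [hMdef]; linarith
  refine ⟨M, hM0, ?_⟩
  rintro t ⟨ht0, htT⟩ s ⟨hs0, hst⟩ x y θ hθ u hu r₀ hr₀ r hr
  have htT' : t ≤ T' := le_trans htT (le_max_left _ _)
  have hσ0 : 0 < t ^ (1 / α) := Real.rpow_pos_of_pos ht0 _
  set ψ := fun r : ℝ => θ (t - r) - u r with hψdef
  set Z := max ‖ψ r₀‖ (t ^ (1 / α)) with hZdef
  have hZσ : t ^ (1 / α) ≤ Z := le_max_right _ _
  have hZ0 : 0 < Z := lt_of_lt_of_le hσ0 hZσ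
  have hmb : ∀ (τ : ℝ) (z : Euc d), ‖-moll d α b |τ| z‖ ≤ C₀ := fun τ z => by
    rw [norm_neg]; exact KFC_moll_bound hα0 hγ0 hC₀ hb_bdd hb_hol _ z
  have hub : ∀ (τ : ℝ) (z : Euc d), ‖moll d α b |τ - (t - s)| z‖ ≤ C₀ := fun τ z =>
    KFC_moll_bound hα0 hγ0 hC₀ hb_bdd hb_hol _ z
  -- the inductive bound
  have main : ∀ n, ∀ r ∈ Set.Icc (0 : ℝ) (t - s), ‖ψ r - ψ r₀‖ ≤
      cseq C₀ γ n * t ^ aseq γ n + dseq C₀ γ Kc Te n * t * Z ^ γ := by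
    intro n
    induction n with
    | zero =>
      intro r hr
      have hθl : ‖θ (t - r) - θ (t - r₀)‖ ≤ C₀ * |r - r₀| := by
        have h := KFC_sol_lip hmb hθ (p := t - r) (q := t - r₀)
          (by linarith [hr.2, hst]) (by linarith [hr₀.2, hst])
        have habs : |t - r - (t - r₀)| = |r - r₀| := by
          rw [show t - r - (t - r₀) = -(r - r₀) by ring, abs_neg]
        rwa [habs] at h
      have hul : ‖u r - u r₀‖ ≤ C₀ * |r - r₀| := KFC_sol_lip hub hu hr.1 hr₀.1
      have hrr : |r - r₀| ≤ t := by
        rw [abs_le]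
        constructor <;> [linarith [hr.1, hr₀.2, hst, hs0]; linarith [hr.2, hr₀.1, hst, hs0]]
      have htri : ‖ψ r - ψ r₀‖ ≤ ‖θ (t - r) - θ (t - r₀)‖ + ‖u r - u r₀‖ := by
        rw [hψdef]
        have : (θ (t - r) - u r) - (θ (t - r₀) - u r₀)
            = (θ (t - r) - θ (t - r₀)) - (u r - u r₀) := by abel
        rw [this]
        exact norm_sub_le _ _
      have haseq0 : aseq γ 0 = 1 := rfl
      have hds0 : dseq C₀ γ Kc Te 0 = 0 := rfl
      have hcs0 : cseq C₀ γ 0 = 2 * C₀ := rfl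
      rw [haseq0, hds0, hcs0, Real.rpow_one]
      have : ‖ψ r - ψ r₀‖ ≤ 2 * (C₀ * t) := by
        calc ‖ψ r - ψ r₀‖ ≤ ‖θ (t - r) - θ (t - r₀)‖ + ‖u r - u r₀‖ := htri
          _ ≤ C₀ * |r - r₀| + C₀ * |r - r₀| := add_le_add hθl hul
          _ = 2 * (C₀ * |r - r₀|) := by ring
          _ ≤ 2 * (C₀ * t) := by
              apply mul_le_mul_of_nonneg_left (mul_le_mul_of_nonneg_left hrr hC₀.le)
              norm_num
      linarith
    | succ n ih =>
      intro r hr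
      set Cn := cseq C₀ γ n with hCndef
      set Dn := dseq C₀ γ Kc Te n with hDndef
      have hCn0 : 0 < Cn := cseq_pos hC₀ n
      have hDn0 : 0 ≤ Dn := dseq_nonneg hC₀.le hKc0.le hTe0.le n
      set X := Cn * t ^ aseq γ n + Dn * t * Z ^ γ with hXdef
      have hX0 : 0 ≤ X := by
        have h1 : 0 ≤ Cn * t ^ aseq γ n := by positivity
        have h2 : 0 ≤ Dn * t * Z ^ γ := by positivity
        linarith
      set B := C₀ * (Z ^ γ + X ^ γ) + 2 * Kc * t ^ (γ / α) with hBdef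
      have hB0 : 0 ≤ B := by positivity
      -- derivative bound
      have hderb : ∀ p ∈ Set.Icc (0 : ℝ) (t - s),
          ‖moll d α b (t - p) (θ (t - p)) - moll d α b (t - s - p) (u p)‖ ≤ B := by
        intro p hp
        have h1 : ‖moll d α b (t - p) (θ (t - p)) - moll d α b (t - p) (u p)‖
            ≤ C₀ * ‖θ (t - p) - u p‖ ^ γ :=
          KFC_moll_hol hα0 hγ0 hC₀ hb_bdd hb_hol _ _ _
        have h2 : ‖moll d α b (t - p) (u p) - b (u p)‖ ≤ Kc * (t - p) ^ (γ / α) :=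
          KFC_moll_close hα0 hγ0 hγ1 hC₀ hb_bdd hb_hol _ (by linarith [hp.2, hst]) _
        have h3 : ‖moll d α b (t - s - p) (u p) - b (u p)‖ ≤ Kc * (t - s - p) ^ (γ / α) :=
          KFC_moll_close hα0 hγ0 hγ1 hC₀ hb_bdd hb_hol _ (by linarith [hp.2]) _
        have h2' : Kc * (t - p) ^ (γ / α) ≤ Kc * t ^ (γ / α) := by
          apply mul_le_mul_of_nonneg_left _ hKc0.le
          apply Real.rpow_le_rpow (by linarith [hp.2, hst]) (by linarith [hp.1]) (by positivity)
        have h3' : Kc * (t - s - p) ^ (γ / α) ≤ Kc * t ^ (γ / α) := by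
          apply mul_le_mul_of_nonneg_left _ hKc0.le
          apply Real.rpow_le_rpow (by linarith [hp.2]) (by linarith [hp.1, hs0]) (by positivity)
        -- ‖ψ p‖ ≤ Z + X
        have hψp : ‖θ (t - p) - u p‖ ≤ Z + X := by
          have h4 := ih p hp
          have h5 : ‖ψ p‖ ≤ ‖ψ r₀‖ + ‖ψ p - ψ r₀‖ := by
            have := norm_add_le (ψ r₀) (ψ p - ψ r₀)
            simpa using this
          have h6 : ‖ψ r₀‖ ≤ Z := le_max_left _ _
          calc ‖θ (t - p) - u p‖ = ‖ψ p‖ := rfl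
            _ ≤ ‖ψ r₀‖ + ‖ψ p - ψ r₀‖ := h5
            _ ≤ Z + X := add_le_add h6 h4
        have hψγ : ‖θ (t - p) - u p‖ ^ γ ≤ Z ^ γ + X ^ γ := by
          calc ‖θ (t - p) - u p‖ ^ γ ≤ (Z + X) ^ γ :=
              Real.rpow_le_rpow (norm_nonneg _) hψp hγ0.le
            _ ≤ Z ^ γ + X ^ γ := KFC_rpow_subadd hZ0.le hX0 hγ0.le hγ1
        calc ‖moll d α b (t - p) (θ (t - p)) - moll d α b (t - s - p) (u p)‖
            ≤ ‖moll d α b (t - p) (θ (t - p)) - moll d α b (t - p) (u p)‖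
              + ‖moll d α b (t - p) (u p) - b (u p)‖
              + ‖b (u p) - moll d α b (t - s - p) (u p)‖ := by
              have habc : moll d α b (t - p) (θ (t - p)) - moll d α b (t - s - p) (u p)
                  = (moll d α b (t - p) (θ (t - p)) - moll d α b (t - p) (u p))
                    + ((moll d α b (t - p) (u p) - b (u p))
                    + (b (u p) - moll d α b (t - s - p) (u p))) := by abel
              rw [habc]
              refine le_trans (norm_add_le _ _) ?_
              have := norm_add_le (moll d α b (t - p) (u p) - b (u p))
                (b (u p) - moll d α b (t - s - p) (u p))
              linarith
          _ ≤ C₀ * ‖θ (t - p) - u p‖ ^ γ + Kc * t ^ (γ / α) + Kc * t ^ (γ / α) := by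
              have h3'' : ‖b (u p) - moll d α b (t - s - p) (u p)‖ ≤ Kc * t ^ (γ / α) := by
                rw [norm_sub_rev]; linarith
              have := add_le_add (add_le_add h1 (le_trans h2 h2')) h3''
              linarith
          _ ≤ C₀ * (Z ^ γ + X ^ γ) + 2 * Kc * t ^ (γ / α) := by
              have := mul_le_mul_of_nonneg_left hψγ hC₀.le
              linarith
      -- mean value
      have hmv : ‖ψ r - ψ r₀‖ ≤ B * t := by
        have h := Convex.norm_image_sub_le_of_norm_hasDerivWithin_le
          (f := ψ) (f' := fun p => moll d α b (t - p) (θ (t - p)) - moll d α b (t - s - p) (u p))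
          (s := Set.Icc (0 : ℝ) (t - s))
          (KFC_psi_deriv hs0 hst hθ hu) hderb (convex_Icc _ _) hr₀ hr
        have hrr : ‖r - r₀‖ ≤ t := by
          rw [Real.norm_eq_abs, abs_le]
          constructor <;> [linarith [hr.1, hr₀.2, hst, hs0]; linarith [hr.2, hr₀.1, hst, hs0]]
        calc ‖ψ r - ψ r₀‖ ≤ B * ‖r - r₀‖ := h
          _ ≤ B * t := mul_le_mul_of_nonneg_left hrr hB0
      -- arithmetic to reach the next step
      have harith : B * t ≤ cseq C₀ γ (n + 1) * t ^ aseq γ (n + 1)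
          + dseq C₀ γ Kc Te (n + 1) * t * Z ^ γ := by
        have e1 : (Cn * t ^ aseq γ n) ^ γ = Cn ^ γ * t ^ (aseq γ n * γ) := by
          rw [Real.mul_rpow hCn0.le (Real.rpow_nonneg ht0.le _), ← Real.rpow_mul ht0.le]
        have e2 : (Dn * t * Z ^ γ) ^ γ = Dn ^ γ * t ^ γ * Z ^ (γ * γ) := by
          rw [Real.mul_rpow (by positivity) (by positivity),
            Real.mul_rpow hDn0 ht0.le, ← Real.rpow_mul hZ0.le]
        have hZγγ : Z ^ (γ * γ) ≤ Z ^ γ * t ^ ((γ * γ - γ) / α) := by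
          have hsplit : Z ^ (γ * γ) = Z ^ γ * Z ^ (γ * γ - γ) := by
            rw [← Real.rpow_add hZ0]; congr 1; ring
          rw [hsplit]
          apply mul_le_mul_of_nonneg_left _ (Real.rpow_nonneg hZ0.le _)
          calc Z ^ (γ * γ - γ) ≤ (t ^ (1 / α)) ^ (γ * γ - γ) :=
              Real.rpow_le_rpow_of_nonpos hσ0 hZσ (by have := mul_le_of_le_one_right hγ0.le hγ1; linarith)
            _ = t ^ ((γ * γ - γ) / α) := by
                rw [← Real.rpow_mul ht0.le]; congr 1; ring
        have hσγ : t ^ (γ / α) ≤ Z ^ γ := by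
          have hid : t ^ (γ / α) = (t ^ (1 / α)) ^ γ := by
            rw [← Real.rpow_mul ht0.le]; congr 1; ring
          rw [hid]
          exact Real.rpow_le_rpow hσ0.le hZσ hγ0.le
        have h1 : X ^ γ ≤ Cn ^ γ * t ^ (aseq γ n * γ)
            + Dn ^ γ * t ^ γ * (Z ^ γ * t ^ ((γ * γ - γ) / α)) := by
          calc X ^ γ ≤ (Cn * t ^ aseq γ n) ^ γ + (Dn * t * Z ^ γ) ^ γ := by
                rw [hXdef]
                exact KFC_rpow_subadd (by positivity) (by positivity) hγ0.le hγ1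
            _ = Cn ^ γ * t ^ (aseq γ n * γ) + Dn ^ γ * t ^ γ * Z ^ (γ * γ) := by rw [e1, e2]
            _ ≤ _ := by
                have := mul_le_mul_of_nonneg_left hZγγ
                  (mul_nonneg (Real.rpow_nonneg hDn0 γ) (Real.rpow_nonneg ht0.le γ))
                linarith [this]
        have h2 : B ≤ C₀ * Z ^ γ + C₀ * (Cn ^ γ * t ^ (aseq γ n * γ))
            + C₀ * (Dn ^ γ * t ^ γ * (Z ^ γ * t ^ ((γ * γ - γ) / α))) + 2 * Kc * Z ^ γ := by
          rw [hBdef]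
          have ha := mul_le_mul_of_nonneg_left h1 hC₀.le
          have hb := mul_le_mul_of_nonneg_left hσγ (by positivity : (0:ℝ) ≤ 2 * Kc)
          linarith [ha, hb]
        have hA : t ^ (aseq γ n * γ) * t = t ^ ((1 : ℝ) + γ * aseq γ n) := by
          rw [show (1 : ℝ) + γ * aseq γ n = aseq γ n * γ + 1 by ring,
            Real.rpow_add ht0, Real.rpow_one]
        have hB2 : t ^ γ * t ^ ((γ * γ - γ) / α) * t = t ^ e' := by
          rw [he'def, show (1 : ℝ) + γ + (γ * γ - γ) / α = γ + (γ * γ - γ) / α + 1 by ring,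
            Real.rpow_add ht0, Real.rpow_add ht0, Real.rpow_one]
        have hE : t ^ e' ≤ Te * t := by
          have hsplit : t ^ e' = t ^ (e' - 1) * t := by
            rw [show e' = (e' - 1) + 1 by ring, Real.rpow_add ht0, Real.rpow_one]
            congr 1
            ring
          rw [hsplit, hTedef]
          apply mul_le_mul_of_nonneg_right _ ht0.le
          exact Real.rpow_le_rpow ht0.le htT' (by linarith)
        have hc : cseq C₀ γ (n + 1) = C₀ * Cn ^ γ := rfl
        have hd : dseq C₀ γ Kc Te (n + 1) = C₀ + 2 * Kc + C₀ * Te * Dn ^ γ := rfl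
        have haa : aseq γ (n + 1) = (1 : ℝ) + γ * aseq γ n := rfl
        calc B * t ≤ (C₀ * Z ^ γ + C₀ * (Cn ^ γ * t ^ (aseq γ n * γ))
              + C₀ * (Dn ^ γ * t ^ γ * (Z ^ γ * t ^ ((γ * γ - γ) / α))) + 2 * Kc * Z ^ γ) * t :=
              mul_le_mul_of_nonneg_right h2 ht0.le
          _ = C₀ * Z ^ γ * t + C₀ * Cn ^ γ * (t ^ (aseq γ n * γ) * t)
              + C₀ * Dn ^ γ * Z ^ γ * (t ^ γ * t ^ ((γ * γ - γ) / α) * t)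
              + 2 * Kc * Z ^ γ * t := by ring
          _ = C₀ * Z ^ γ * t + C₀ * Cn ^ γ * t ^ ((1 : ℝ) + γ * aseq γ n)
              + C₀ * Dn ^ γ * Z ^ γ * t ^ e' + 2 * Kc * Z ^ γ * t := by rw [hA, hB2]
          _ ≤ C₀ * Z ^ γ * t + C₀ * Cn ^ γ * t ^ ((1 : ℝ) + γ * aseq γ n)
              + C₀ * Dn ^ γ * Z ^ γ * (Te * t) + 2 * Kc * Z ^ γ * t := by
              have hcoef : (0:ℝ) ≤ C₀ * Dn ^ γ * Z ^ γ := by positivity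
              linarith [mul_le_mul_of_nonneg_left hE hcoef]
          _ = C₀ * Cn ^ γ * t ^ ((1 : ℝ) + γ * aseq γ n)
              + (C₀ + 2 * Kc + C₀ * Te * Dn ^ γ) * t * Z ^ γ := by ring
          _ = cseq C₀ γ (n + 1) * t ^ aseq γ (n + 1)
              + dseq C₀ γ Kc Te (n + 1) * t * Z ^ γ := by rw [hc, hd, haa]
      linarith
  -- conclude
  set Q := max (‖ψ r₀‖ / t ^ (1 / α)) 1 with hQdef
  have hQ1 : (1 : ℝ) ≤ Q := le_max_right _ _
  have hZQ : Z = t ^ (1 / α) * Q := by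
    rw [hZdef, hQdef, mul_max_of_nonneg _ _ hσ0.le, mul_one,
      mul_div_cancel₀ _ (ne_of_gt hσ0)]
  have hmain := main N r hr
  have haN1 : 1 ≤ aseq γ N := aseq_ge_one hγ0.le N
  have ht1 : t ^ aseq γ N ≤ T' ^ aseq γ N * (t ^ (1 / α) * Q) := by
    have hsplit : t ^ aseq γ N = t ^ (1 / α) * t ^ (aseq γ N - 1 / α) := by
      rw [← Real.rpow_add ht0]
      congr 1
      ring
    have h1 : t ^ (aseq γ N - 1 / α) ≤ T' ^ (aseq γ N - 1 / α) :=
      Real.rpow_le_rpow ht0.le htT' (by linarith)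
    have h2 : T' ^ (aseq γ N - 1 / α) ≤ T' ^ aseq γ N := by
      apply Real.rpow_le_rpow_of_exponent_le hT'1
      have : 0 ≤ 1 / α := by positivity
      linarith
    calc t ^ aseq γ N = t ^ (1 / α) * t ^ (aseq γ N - 1 / α) := hsplit
      _ ≤ t ^ (1 / α) * T' ^ aseq γ N :=
          mul_le_mul_of_nonneg_left (le_trans h1 h2) hσ0.le
      _ ≤ T' ^ aseq γ N * (t ^ (1 / α) * Q) := by
          have h3 : t ^ (1 / α) * T' ^ aseq γ N ≤ (t ^ (1 / α) * T' ^ aseq γ N) * Q := by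
            nth_rewrite 1 [← mul_one (t ^ (1 / α) * T' ^ aseq γ N)]
            apply mul_le_mul_of_nonneg_left hQ1
            positivity
          calc t ^ (1 / α) * T' ^ aseq γ N ≤ (t ^ (1 / α) * T' ^ aseq γ N) * Q := h3
            _ = T' ^ aseq γ N * (t ^ (1 / α) * Q) := by ring
  have ht2 : t * Z ^ γ ≤ T' ^ ((α + γ - 1) / α) * (t ^ (1 / α) * Q) := by
    have hQγ : Q ^ γ ≤ Q := by
      have := Real.rpow_le_rpow_of_exponent_le hQ1 hγ1
      rwa [Real.rpow_one] at this
    have hZγ : Z ^ γ = t ^ (γ / α) * Q ^ γ := by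
      rw [hZQ, Real.mul_rpow hσ0.le (by positivity), ← Real.rpow_mul ht0.le]
      congr 2
      ring
    have hpow : t * t ^ (γ / α) = t ^ (1 / α) * t ^ ((α + γ - 1) / α) := by
      have hexp : (1 : ℝ) / α + (α + γ - 1) / α = 1 + γ / α := by
        field_simp
        ring
      rw [← Real.rpow_add ht0, hexp, Real.rpow_add ht0, Real.rpow_one]
    have hTexp : t ^ ((α + γ - 1) / α) ≤ T' ^ ((α + γ - 1) / α) := by
      apply Real.rpow_le_rpow ht0.le htT'
      apply div_nonneg (by linarith) hα0.le
    calc t * Z ^ γ = t * t ^ (γ / α) * Q ^ γ := by rw [hZγ]; ring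
      _ = t ^ (1 / α) * t ^ ((α + γ - 1) / α) * Q ^ γ := by rw [hpow]
      _ ≤ t ^ (1 / α) * T' ^ ((α + γ - 1) / α) * Q := by
          apply mul_le_mul (mul_le_mul_of_nonneg_left hTexp hσ0.le) hQγ
            (by positivity) (by positivity)
      _ = T' ^ ((α + γ - 1) / α) * (t ^ (1 / α) * Q) := by ring
  have hcN : 0 < cseq C₀ γ N := cseq_pos hC₀ N
  have hdN : 0 ≤ dseq C₀ γ Kc Te N := dseq_nonneg hC₀.le hKc0.le hTe0.le N
  calc ‖ψ r - ψ r₀‖ ≤ cseq C₀ γ N * t ^ aseq γ N + dseq C₀ γ Kc Te N * t * Z ^ γ := hmain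
    _ ≤ cseq C₀ γ N * (T' ^ aseq γ N * (t ^ (1 / α) * Q))
        + dseq C₀ γ Kc Te N * (T' ^ ((α + γ - 1) / α) * (t ^ (1 / α) * Q)) := by
        have ha := mul_le_mul_of_nonneg_left ht1 hcN.le
        have hb := mul_le_mul_of_nonneg_left ht2 hdN
        linarith [ha, hb]
    _ = M * t ^ (1 / α) * Q := by rw [hMdef]; ring

lemma KFC_Kfac (d : ℕ) (α lam t : ℝ) (hlam : 0 ≤ lam) (ht : 0 < t) (x y : Euc d) :
    Kker d α lam t x y = min ((max (‖y - x‖ / t ^ (1 / α)) 1) ^ lam) (t ^ (-(lam / α))) *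
      (t ^ (-(d : ℝ) / α) * (max (‖y - x‖ / t ^ (1 / α)) 1) ^ (-(d : ℝ) - α)) := by
  have hσ : 0 < t ^ (1 / α) := Real.rpow_pos_of_pos ht _
  have hnorm : ‖(t ^ (1 / α))⁻¹ • (y - x)‖ = ‖y - x‖ / t ^ (1 / α) := by
    rw [norm_smul, Real.norm_eq_abs, abs_inv, abs_of_pos hσ, inv_mul_eq_div]
  have hρ0 : 0 ≤ ‖y - x‖ / t ^ (1 / α) := by positivity
  have hmax : max ((‖y - x‖ / t ^ (1 / α)) ^ lam) 1
      = (max (‖y - x‖ / t ^ (1 / α)) 1) ^ lam := by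
    rcases le_total (‖y - x‖ / t ^ (1 / α)) 1 with h | h
    · rw [max_eq_right h, Real.one_rpow, max_eq_right (Real.rpow_le_one hρ0 h hlam)]
    · rw [max_eq_left h, max_eq_left (Real.one_le_rpow h hlam)]
  rw [Kker, Gfun, hnorm, hmax]

lemma Kker_ratio (d : ℕ) (α lam t : ℝ) (hα : 0 < α) (hlam : 0 ≤ lam) (ht : 0 < t)
    (x y x' y' : Euc d) (A : ℝ) (hA : 1 ≤ A)
    (h1 : max (‖y' - x'‖ / t ^ (1 / α)) 1 ≤ A * max (‖y - x‖ / t ^ (1 / α)) 1)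
    (h2 : max (‖y - x‖ / t ^ (1 / α)) 1 ≤ A * max (‖y' - x'‖ / t ^ (1 / α)) 1) :
    Kker d α lam t x' y' ≤ A ^ (lam + d + α) * Kker d α lam t x y := by
  have hA0 : (0 : ℝ) < A := lt_of_lt_of_le one_pos hA
  rw [KFC_Kfac d α lam t hlam ht x y, KFC_Kfac d α lam t hlam ht x' y']
  set m := max (‖y - x‖ / t ^ (1 / α)) 1 with hm
  set m' := max (‖y' - x'‖ / t ^ (1 / α)) 1 with hm'
  have hm0 : (0 : ℝ) < m := lt_of_lt_of_le one_pos (le_max_right _ _)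
  have hm'0 : (0 : ℝ) < m' := lt_of_lt_of_le one_pos (le_max_right _ _)
  have hw0 : (0 : ℝ) ≤ t ^ (-(lam / α)) := Real.rpow_nonneg ht.le _
  have htd0 : (0 : ℝ) ≤ t ^ (-(d : ℝ) / α) := Real.rpow_nonneg ht.le _
  have f1 : min (m' ^ lam) (t ^ (-(lam / α))) ≤ A ^ lam * min (m ^ lam) (t ^ (-(lam / α))) := by
    have hm'l : m' ^ lam ≤ A ^ lam * m ^ lam := by
      rw [← Real.mul_rpow hA0.le hm0.le]
      exact Real.rpow_le_rpow hm'0.le h1 hlam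
    have hAl1 : 1 ≤ A ^ lam := Real.one_le_rpow hA hlam
    rcases le_total (m ^ lam) (t ^ (-(lam / α))) with h | h
    · rw [min_eq_left h]
      exact le_trans (min_le_left _ _) hm'l
    · rw [min_eq_right h]
      exact le_trans (min_le_right _ _) (le_mul_of_one_le_left hw0 hAl1)
  have f2 : m' ^ (-(d : ℝ) - α) ≤ A ^ ((d : ℝ) + α) * m ^ (-(d : ℝ) - α) := by
    have h3 : (A * m') ^ (-(d : ℝ) - α) ≤ m ^ (-(d : ℝ) - α) :=
      Real.rpow_le_rpow_of_nonpos hm0 h2 (by linarith)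
    rw [Real.mul_rpow hA0.le hm'0.le] at h3
    have hcancel : A ^ ((d : ℝ) + α) * A ^ (-(d : ℝ) - α) = 1 := by
      rw [← Real.rpow_add hA0]
      norm_num
    calc m' ^ (-(d : ℝ) - α)
        = (A ^ ((d : ℝ) + α) * A ^ (-(d : ℝ) - α)) * m' ^ (-(d : ℝ) - α) := by
          rw [hcancel, one_mul]
      _ = A ^ ((d : ℝ) + α) * (A ^ (-(d : ℝ) - α) * m' ^ (-(d : ℝ) - α)) := by ring
      _ ≤ A ^ ((d : ℝ) + α) * m ^ (-(d : ℝ) - α) := by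
          apply mul_le_mul_of_nonneg_left h3 (Real.rpow_nonneg hA0.le _)
  have hAe : A ^ lam * A ^ ((d : ℝ) + α) = A ^ (lam + (d : ℝ) + α) := by
    rw [← Real.rpow_add hA0]
    congr 1
    ring
  calc min (m' ^ lam) (t ^ (-(lam / α))) * (t ^ (-(d : ℝ) / α) * m' ^ (-(d : ℝ) - α))
      ≤ (A ^ lam * min (m ^ lam) (t ^ (-(lam / α)))) *
        (t ^ (-(d : ℝ) / α) * (A ^ ((d : ℝ) + α) * m ^ (-(d : ℝ) - α))) := by
        apply mul_le_mul f1 (mul_le_mul_of_nonneg_left f2 htd0) (by positivity) (by positivity)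
    _ = A ^ (lam + (d : ℝ) + α) * (min (m ^ lam) (t ^ (-(lam / α))) *
        (t ^ (-(d : ℝ) / α) * m ^ (-(d : ℝ) - α))) := by
        rw [← hAe]; ring


theorem kernel_flow_comparison
    (d : ℕ) (hd : 1 ≤ d) (α γ C₀ : ℝ)
    (hα : α ∈ Set.Ioo (0 : ℝ) 2) (hγ : γ ∈ Set.Ioc (0 : ℝ) 1) (hC₀ : 0 < C₀)
    (b : Euc d → Euc d)
    (hb_bdd : ∀ x, ‖b x‖ ≤ C₀)
    (hb_hol : ∀ x y, ‖b x - b y‖ ≤ C₀ * ‖x - y‖ ^ γ)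
    (hbal : 1 < α + γ) :
    ∀ lam ∈ Set.Ico (0 : ℝ) α, ∀ T > (0 : ℝ), ∃ C₁ > (0 : ℝ), ∃ C₂ > (0 : ℝ),
      ∀ t ∈ Set.Ioc (0 : ℝ) T, ∀ s ∈ Set.Icc (0 : ℝ) t, ∀ x y : Euc d,
      ∀ θ : ℝ → Euc d, IsSol d (fun τ z => -moll d α b |τ| z) y θ →
      ∀ u : ℝ → Euc d, IsSol d (fun τ z => moll d α b |τ - (t - s)| z) x u →
        C₁ * Kker d α lam t x (θ t) ≤ Kker d α lam t (u (t - s)) (θ s) ∧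
        Kker d α lam t (u (t - s)) (θ s) ≤ C₂ * Kker d α lam t x (θ t) := by
  intro lam hlam T hT
  obtain ⟨hlam0, hlamα⟩ := hlam
  have hα0 : 0 < α := hα.1
  obtain ⟨M, hM0, hMbd⟩ := psi_bound d α γ C₀ hα hγ hC₀ b hb_bdd hb_hol hbal T hT
  set A := 1 + M with hAdef
  have hA1 : (1 : ℝ) ≤ A := by rw [hAdef]; linarith
  have hA0 : (0 : ℝ) < A := lt_of_lt_of_le one_pos hA1
  have hAE0 : (0 : ℝ) < A ^ (lam + (d : ℝ) + α) := Real.rpow_pos_of_pos hA0 _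
  refine ⟨(A ^ (lam + (d : ℝ) + α))⁻¹, by positivity, A ^ (lam + (d : ℝ) + α), hAE0, ?_⟩
  rintro t ht s hs x y θ hθ u hu
  have ht0 : 0 < t := ht.1
  have hσ0 : 0 < t ^ (1 / α) := Real.rpow_pos_of_pos ht0 _
  have h0mem : (0 : ℝ) ∈ Set.Icc (0 : ℝ) (t - s) := ⟨le_refl _, by linarith [hs.2]⟩
  have hLmem : (t - s) ∈ Set.Icc (0 : ℝ) (t - s) := ⟨by linarith [hs.2], le_refl _⟩
  have hts : t - (t - s) = s := by ring
  have hP1 := hMbd t ht s hs x y θ hθ u hu 0 h0mem (t - s) hLmem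
  have hP2 := hMbd t ht s hs x y θ hθ u hu (t - s) hLmem 0 h0mem
  rw [hts, sub_zero, hu.1] at hP1 hP2
  -- hP1 : ‖(θ s - u (t-s)) - (θ t - x)‖ ≤ M * σ * max (‖θ t - x‖/σ) 1
  -- hP2 : ‖(θ t - x) - (θ s - u (t-s))‖ ≤ M * σ * max (‖θ s - u (t-s)‖/σ) 1
  set ρ := ‖θ t - x‖ / t ^ (1 / α) with hρdef
  set ρ' := ‖θ s - u (t - s)‖ / t ^ (1 / α) with hρ'def
  have hρ0 : 0 ≤ ρ := by rw [hρdef]; positivity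
  have hρ'0 : 0 ≤ ρ' := by rw [hρ'def]; positivity
  have habs : |ρ' - ρ| ≤ ‖(θ s - u (t - s)) - (θ t - x)‖ / t ^ (1 / α) := by
    rw [hρdef, hρ'def, div_sub_div_same, abs_div, abs_of_pos hσ0]
    exact div_le_div_of_nonneg_right (abs_norm_sub_norm_le _ _) hσ0.le
  have key1 : max ρ' 1 ≤ A * max ρ 1 := by
    have hd1 : ρ' - ρ ≤ M * max ρ 1 := by
      have h2 : ‖(θ s - u (t - s)) - (θ t - x)‖ / t ^ (1 / α) ≤ M * max ρ 1 := by
        rw [div_le_iff₀ hσ0]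
        calc ‖(θ s - u (t - s)) - (θ t - x)‖ ≤ M * t ^ (1 / α) * max ρ 1 := hP1
          _ = M * max ρ 1 * t ^ (1 / α) := by ring
      linarith [le_trans (le_abs_self (ρ' - ρ)) (le_trans habs h2)]
    apply max_le
    · have : ρ ≤ max ρ 1 := le_max_left _ _
      have hM1 : 0 ≤ M * max ρ 1 := by
        apply mul_nonneg hM0.le
        exact le_trans zero_le_one (le_max_right _ _)
      calc ρ' ≤ ρ + M * max ρ 1 := by linarith
        _ ≤ max ρ 1 + M * max ρ 1 := by linarith
        _ = A * max ρ 1 := by rw [hAdef]; ring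
    · calc (1 : ℝ) ≤ max ρ 1 := le_max_right _ _
        _ ≤ A * max ρ 1 := le_mul_of_one_le_left (le_trans zero_le_one (le_max_right _ _)) hA1
  have key2 : max ρ 1 ≤ A * max ρ' 1 := by
    have habs' : |ρ - ρ'| ≤ ‖(θ t - x) - (θ s - u (t - s))‖ / t ^ (1 / α) := by
      rw [← abs_neg, show -(ρ - ρ') = ρ' - ρ by ring, ← norm_neg]
      rw [show -((θ t - x) - (θ s - u (t - s))) = (θ s - u (t - s)) - (θ t - x) by abel]
      exact habs
    have hd1 : ρ - ρ' ≤ M * max ρ' 1 := by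
      have h2 : ‖(θ t - x) - (θ s - u (t - s))‖ / t ^ (1 / α) ≤ M * max ρ' 1 := by
        rw [div_le_iff₀ hσ0]
        calc ‖(θ t - x) - (θ s - u (t - s))‖ ≤ M * t ^ (1 / α) * max ρ' 1 := hP2
          _ = M * max ρ' 1 * t ^ (1 / α) := by ring
      linarith [le_trans (le_abs_self (ρ - ρ')) (le_trans habs' h2)]
    apply max_le
    · have hM1 : 0 ≤ M * max ρ' 1 := by
        apply mul_nonneg hM0.le
        exact le_trans zero_le_one (le_max_right _ _)
      calc ρ ≤ ρ' + M * max ρ' 1 := by linarith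
        _ ≤ max ρ' 1 + M * max ρ' 1 := by linarith [le_max_left ρ' (1:ℝ)]
        _ = A * max ρ' 1 := by rw [hAdef]; ring
    · calc (1 : ℝ) ≤ max ρ' 1 := le_max_right _ _
        _ ≤ A * max ρ' 1 := le_mul_of_one_le_left (le_trans zero_le_one (le_max_right _ _)) hA1
  have hK1 : Kker d α lam t (u (t - s)) (θ s) ≤ A ^ (lam + (d : ℝ) + α) * Kker d α lam t x (θ t) :=
    Kker_ratio d α lam t hα0 hlam0 ht0 x (θ t) (u (t - s)) (θ s) A hA1 key1 key2
  have hK2 : Kker d α lam t x (θ t) ≤ A ^ (lam + (d : ℝ) + α) * Kker d α lam t (u (t - s)) (θ s) :=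
    Kker_ratio d α lam t hα0 hlam0 ht0 (u (t - s)) (θ s) x (θ t) A hA1 key2 key1
  exact ⟨(inv_mul_le_iff₀ hAE0).mpr hK2, hK1⟩
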